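/- Every nonzero component of any minimizer x^{k+1} of the subproblem min_{x∈X} λ‖x‖₀ + (L/2)‖x − y + ∇f(y)/L‖² + (μ/2)‖x − y‖², where X = {x : l ≤ x ≤ u} is a box, satisfies |x^{k+1}_i| ≥ ls := min(({|l_j|, |u_j|, √(2λ/(L+μ)) : j = 1,…,n}) \ {0}). -/

import Mathlib

open scoped Classical

/-- `norm0 x` counts the nonzero entries of `x` (the ℓ0 "norm"), as a real number. -/
noncomputable def norm0 {n : ℕ} (x : EuclideanSpace ℝ (Fin n)) : ℝ :=
  ((Finset.univ.filter fun i => x i ≠ 0).card : ℝ)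

private lemma q_diff_aux (L mu yi gi : ℝ) (hL : L ≠ 0) (hb : L + mu ≠ 0) (s t : ℝ) :
    (L / 2 * (t - yi + L⁻¹ * gi) ^ 2 + mu / 2 * (t - yi) ^ 2)
      - (L / 2 * (s - yi + L⁻¹ * gi) ^ 2 + mu / 2 * (s - yi) ^ 2)
    = (L + mu) / 2 * ((t - ((L + mu) * yi - gi) / (L + mu)) ^ 2
        - (s - ((L + mu) * yi - gi) / (L + mu)) ^ 2) := by
  field_simp
  ring

set_option maxHeartbeats 1000000 in
/-- Every nonzero component of a minimizer of the PIHT subproblem over the box `X`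
has magnitude at least `ls = min(({|l_j|, |u_j|, √(2λ/(L+μ))}) \ {0})`. -/
theorem subproblem_nonzero_lower_bound {n : ℕ}
    (lam mu L : ℝ) (hlam : 0 < lam) (hmu : 0 < mu) (hL : 0 < L)
    (l u : Fin n → ℝ) (y g : EuclideanSpace ℝ (Fin n))
    (X : Set (EuclideanSpace ℝ (Fin n)))
    (hX : X = {x : EuclideanSpace ℝ (Fin n) | ∀ i, l i ≤ x i ∧ x i ≤ u i})
    (w : EuclideanSpace ℝ (Fin n)) (hw : w ∈ X)
    (hmin : ∀ z ∈ X,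
      lam * norm0 w + L / 2 * ‖w - y + L⁻¹ • g‖ ^ 2 + mu / 2 * ‖w - y‖ ^ 2
        ≤ lam * norm0 z + L / 2 * ‖z - y + L⁻¹ • g‖ ^ 2 + mu / 2 * ‖z - y‖ ^ 2) :
    ∀ i, w i ≠ 0 →
      sInf ((((Set.range fun j => |l j|) ∪ (Set.range fun j => |u j|))
          ∪ {Real.sqrt (2 * lam / (L + mu))}) \ {0}) ≤ |w i| := by
  intro i hwi
  have hβpos : (0:ℝ) < L + mu := by positivity
  set S := ((((Set.range fun j => |l j|) ∪ (Set.range fun j => |u j|))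
          ∪ {Real.sqrt (2 * lam / (L + mu))}) \ {0}) with hSdef
  have hbdd : BddBelow S := by
    refine ⟨0, fun s hs => ?_⟩
    rcases hs.1 with (h | h) | h
    · obtain ⟨j, rfl⟩ := h; positivity
    · obtain ⟨j, rfl⟩ := h; positivity
    · simp only [Set.mem_singleton_iff] at h; subst h; positivity
  have key : ∀ s ∈ S, s ≤ |w i| → sInf S ≤ |w i| :=
    fun s hs hle => le_trans (csInf_le hbdd hs) hle
  rw [hX] at hw hmin
  have hwl := (hw i).1
  have hwu := (hw i).2
  rcases lt_or_ge 0 (l i) with hl0 | hl0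
  · refine key |l i| ⟨Or.inl (Or.inl ⟨i, rfl⟩), ?_⟩ ?_
    · simp only [Set.mem_singleton_iff, abs_eq_zero]; intro h; linarith [h ▸ hl0]
    · rw [abs_of_pos hl0, abs_of_pos (lt_of_lt_of_le hl0 hwl)]; exact hwl
  rcases lt_or_ge (u i) 0 with hu0 | hu0
  · refine key |u i| ⟨Or.inl (Or.inr ⟨i, rfl⟩), ?_⟩ ?_
    · simp only [Set.mem_singleton_iff, abs_eq_zero]; intro h; linarith [h ▸ hu0]
    · rw [abs_of_neg hu0, abs_of_neg (lt_of_le_of_lt hwu hu0)]; linarith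
  by_cases hwel : w i = l i
  · refine key |l i| ⟨Or.inl (Or.inl ⟨i, rfl⟩), ?_⟩ (le_of_eq (by rw [hwel]))
    simp only [Set.mem_singleton_iff, abs_eq_zero]
    intro h; exact hwi (hwel.trans h)
  by_cases hweu : w i = u i
  · refine key |u i| ⟨Or.inl (Or.inr ⟨i, rfl⟩), ?_⟩ (le_of_eq (by rw [hweu]))
    simp only [Set.mem_singleton_iff, abs_eq_zero]
    intro h; exact hwi (hweu.trans h)
  -- interior case: l i < w i < u i, and l i ≤ 0 ≤ u i
  have hla : l i < w i := lt_of_le_of_ne hwl (Ne.symm hwel)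
  have hua : w i < u i := lt_of_le_of_ne hwu hweu
  have hnormsq : ∀ v : EuclideanSpace ℝ (Fin n), ‖v‖ ^ 2 = ∑ j, (v j) ^ 2 := by
    intro v
    rw [EuclideanSpace.norm_eq, Real.sq_sqrt (by positivity)]
    simp [sq_abs]
  set q : ℝ → ℝ := fun t => L / 2 * (t - y i + L⁻¹ * g i) ^ 2 + mu / 2 * (t - y i) ^ 2
    with hqdef
  -- coordinatewise objective comparison
  set zf : ℝ → EuclideanSpace ℝ (Fin n) := fun t => WithLp.toLp 2 (Function.update w i t) with hzf
  have hzfi : ∀ t : ℝ, zf t i = t := by intro t; simp [hzf]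
  have hzfj : ∀ (t : ℝ) (j : Fin n), j ≠ i → zf t j = w j := by
    intro t j hj; simp [hzf, Function.update_of_ne hj]
  have hfeas : ∀ t : ℝ, l i ≤ t → t ≤ u i →
      ∀ j, l j ≤ zf t j ∧ zf t j ≤ u j := by
    intro t ht1 ht2 j
    by_cases hj : j = i
    · subst hj; rw [hzfi]; exact ⟨ht1, ht2⟩
    · rw [hzfj t j hj]; exact hw j
  have hsum1 : ∀ t : ℝ,
      ‖zf t - y + L⁻¹ • g‖ ^ 2 - ‖w - y + L⁻¹ • g‖ ^ 2
      = (t - y i + L⁻¹ * g i) ^ 2 - (w i - y i + L⁻¹ * g i) ^ 2 := by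
    intro t
    rw [hnormsq, hnormsq, ← Finset.sum_sub_distrib]
    rw [Finset.sum_eq_single i]
    · simp [PiLp.sub_apply, PiLp.add_apply, PiLp.smul_apply, hzfi]
    · intro j _ hj
      simp [PiLp.sub_apply, PiLp.add_apply, PiLp.smul_apply, hzfj t j hj]
    · simp
  have hsum2 : ∀ t : ℝ,
      ‖zf t - y‖ ^ 2 - ‖w - y‖ ^ 2
      = (t - y i) ^ 2 - (w i - y i) ^ 2 := by
    intro t
    rw [hnormsq, hnormsq, ← Finset.sum_sub_distrib]
    rw [Finset.sum_eq_single i]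
    · simp [PiLp.sub_apply, hzfi]
    · intro j _ hj
      simp [PiLp.sub_apply, hzfj t j hj]
    · simp
  have hcomp : ∀ t : ℝ, l i ≤ t → t ≤ u i → t ≠ 0 → q (w i) ≤ q t := by
    intro t ht1 ht2 ht0
    have hmin' := hmin (zf t) (hfeas t ht1 ht2)
    have hn0 : norm0 (zf t) = norm0 w := by
      unfold norm0
      congr 2
      apply Finset.filter_congr
      intro j _
      by_cases hj : j = i
      · subst hj; simp [hzfi, ht0, hwi]
      · simp [hzfj t j hj]
    have h1 := hsum1 t
    have h2 := hsum2 t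
    simp only [hqdef]
    nlinarith [hmin', hn0, h1, h2]
  have hcomp0 : lam + q (w i) ≤ q 0 := by
    have hmin' := hmin (zf 0) (hfeas 0 hl0 hu0)
    have hmem : i ∈ Finset.univ.filter fun j => w j ≠ 0 := by simp [hwi]
    have hn0 : norm0 (zf 0) = norm0 w - 1 := by
      unfold norm0
      have hset : (Finset.univ.filter fun j => zf 0 j ≠ 0)
          = (Finset.univ.filter fun j => w j ≠ 0).erase i := by
        ext j
        simp only [Finset.mem_filter, Finset.mem_erase, Finset.mem_univ, true_and]
        by_cases hj : j = i
        · subst hj; simp [hzfi]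
        · simp [hzfj 0 j hj, hj]
      rw [hset, Finset.card_erase_of_mem hmem]
      have hcard : 1 ≤ (Finset.univ.filter fun j => w j ≠ 0).card :=
        Finset.card_pos.2 ⟨i, hmem⟩
      rw [Nat.cast_sub hcard]
      simp
    have h1 := hsum1 0
    have h2 := hsum2 0
    simp only [hqdef]
    nlinarith [hmin', hn0, h1, h2]
  -- q t - q s = (L+mu)/2 * ((t - cb)^2 - (s - cb)^2)
  set cb := ((L + mu) * y i - g i) / (L + mu) with hcbdef
  clear_value cb
  have hq_eq : ∀ s t : ℝ, q t - q s = (L + mu) / 2 * ((t - cb) ^ 2 - (s - cb) ^ 2) := by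
    intro s t
    simp only [hqdef, hcbdef]
    exact q_diff_aux L mu (y i) (g i) hL.ne' hβpos.ne' s t
  clear_value q
  set a := w i with hadef
  clear_value a
  -- a = cb
  have hacb : a = cb := by
    by_contra hne
    set d := a - cb with hd
    clear_value d
    have hd0 : d ≠ 0 := by rw [hd]; exact sub_ne_zero.mpr hne
    set h0 := min (min |d| (min (u i - a) (a - l i))) |a| / 2 with hh0
    clear_value h0
    have hm1 : h0 ≤ |d| / 2 := by
      have h' : min (min |d| (min (u i - a) (a - l i))) |a| ≤ |d| :=
        le_trans (min_le_left _ _) (min_le_left _ _)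
      rw [hh0]; linarith
    have hm2 : h0 ≤ (u i - a) / 2 := by
      have h' : min (min |d| (min (u i - a) (a - l i))) |a| ≤ u i - a :=
        le_trans (min_le_left _ _) (le_trans (min_le_right _ _) (min_le_left _ _))
      rw [hh0]; linarith
    have hm3 : h0 ≤ (a - l i) / 2 := by
      have h' : min (min |d| (min (u i - a) (a - l i))) |a| ≤ a - l i :=
        le_trans (min_le_left _ _) (le_trans (min_le_right _ _) (min_le_right _ _))
      rw [hh0]; linarith
    have hm4 : h0 ≤ |a| / 2 := by
      have h' := min_le_right (min |d| (min (u i - a) (a - l i))) |a|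
      rw [hh0]; linarith
    have hh0pos : 0 < h0 := by
      rw [hh0]
      apply div_pos _ two_pos
      apply lt_min _ (abs_pos.mpr hwi)
      exact lt_min (abs_pos.mpr hd0) (lt_min (by linarith) (by linarith))
    rcases hd0.lt_or_gt with hdneg | hdpos
    · -- d < 0 : move right by h0
      have hda : |d| = -d := abs_of_neg hdneg
      have hane : a + h0 ≠ 0 := by
        intro heq
        have ha' : |a| = h0 := by
          rw [show a = -h0 by linarith, abs_neg, abs_of_pos hh0pos]
        have : (0:ℝ) < |a| := abs_pos.mpr hwi
        linarith
      have hq1 := hcomp (a + h0) (by linarith) (by linarith) hane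
      have he := hq_eq a (a + h0)
      rw [← hd, show a + h0 - cb = d + h0 by rw [hd]; ring] at he
      have hm1' : h0 ≤ -d / 2 := by rw [hda] at hm1; linarith
      have E2 : 0 ≤ ((L + mu) * h0) * (-d / 2 - h0) :=
        mul_nonneg (mul_pos hβpos hh0pos).le (by linarith)
      nlinarith [hq1, he, E2, mul_pos (mul_pos hβpos hh0pos) hh0pos]
    · -- 0 < d : move left by h0
      have hda : |d| = d := abs_of_pos hdpos
      have hane : a - h0 ≠ 0 := by
        intro heq
        have ha' : |a| = h0 := by
          rw [show a = h0 by linarith, abs_of_pos hh0pos]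
        have : (0:ℝ) < |a| := abs_pos.mpr hwi
        linarith
      have hq1 := hcomp (a - h0) (by linarith) (by linarith) hane
      have he := hq_eq a (a - h0)
      rw [← hd, show a - h0 - cb = d - h0 by rw [hd]; ring] at he
      have hm1' : h0 ≤ d / 2 := by rw [hda] at hm1; linarith
      have E2 : 0 ≤ ((L + mu) * h0) * (d / 2 - h0) :=
        mul_nonneg (mul_pos hβpos hh0pos).le (by linarith)
      nlinarith [hq1, he, E2, mul_pos (mul_pos hβpos hh0pos) hh0pos]
  -- conclude
  have hlb : 2 * lam / (L + mu) ≤ a ^ 2 := by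
    have he := hq_eq a 0
    rw [← hacb] at he
    have : lam ≤ (L + mu) / 2 * a ^ 2 := by nlinarith [hcomp0, he]
    rw [div_le_iff₀ hβpos]
    nlinarith [this]
  refine key (Real.sqrt (2 * lam / (L + mu))) ⟨Or.inr rfl, ?_⟩ ?_
  · simp only [Set.mem_singleton_iff]
    have : (0:ℝ) < Real.sqrt (2 * lam / (L + mu)) :=
      Real.sqrt_pos.mpr (by positivity)
    exact ne_of_gt this
  · calc Real.sqrt (2 * lam / (L + mu)) ≤ Real.sqrt (a ^ 2) :=
          Real.sqrt_le_sqrt hlb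
      _ = |a| := Real.sqrt_sq_eq_abs a
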